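/- A split graph G is a block graph if and only if G contains no induced diamond, where a diamond is the graph on 4 vertices with 5 edges (K4 minus one edge). -/

import Mathlib

variable {V : Type*}

def IsBiconn (G : SimpleGraph V) (B : Set V) : Prop :=
  (G.induce B).Connected ∧ ∀ v ∈ B, (G.induce (B \ {v})).Connected

def IsBlock (G : SimpleGraph V) (B : Set V) : Prop :=
  IsBiconn G B ∧ ∀ B' : Set V, IsBiconn G B' → B ⊆ B' → B' = B

def IsBlockGraph (G : SimpleGraph V) : Prop :=
  ∀ B : Set V, IsBlock G B → G.IsClique B

/-- `a,b,c,d` induce a diamond (K4 minus the edge `cd`). -/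
def InducedDiamond (G : SimpleGraph V) (a b c d : V) : Prop :=
  a ≠ b ∧ a ≠ c ∧ a ≠ d ∧ b ≠ c ∧ b ≠ d ∧ c ≠ d ∧
  G.Adj a b ∧ G.Adj a c ∧ G.Adj a d ∧ G.Adj b c ∧ G.Adj b d ∧ ¬ G.Adj c d

private lemma reach_mono' (G : SimpleGraph V) {S T : Set V} (h : S ⊆ T) {x y : V}
    (hx : x ∈ S) (hy : y ∈ S)
    (hr : (G.induce S).Reachable ⟨x, hx⟩ ⟨y, hy⟩) :
    (G.induce T).Reachable ⟨x, h hx⟩ ⟨y, h hy⟩ := by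
  have := hr.map (SimpleGraph.induceHomOfLE G h).toHom
  exact this

private lemma exists_nbr' (G : SimpleGraph V) {S : Set V} (hc : (G.induce S).Connected)
    {x y : V} (hx : x ∈ S) (hy : y ∈ S) (hxy : x ≠ y) :
    ∃ z ∈ S, G.Adj x z := by
  obtain ⟨w⟩ := hc.preconnected ⟨x, hx⟩ ⟨y, hy⟩
  cases w with
  | nil => exact absurd rfl hxy
  | cons h p => exact ⟨_, (Subtype.mem _), h⟩

private lemma chain_union_conn' (G : SimpleGraph V) (c : Set (Set V))
    (hchain : IsChain (· ⊆ ·) c) (hne : c.Nonempty)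
    (hconn : ∀ S ∈ c, (G.induce S).Connected) :
    (G.induce (⋃₀ c)).Connected := by
  obtain ⟨S0, hS0⟩ := hne
  have hS0ne : S0.Nonempty := by
    obtain ⟨⟨v, hv⟩⟩ := (hconn S0 hS0).nonempty
    exact ⟨v, hv⟩
  haveI : Nonempty (⋃₀ c : Set V) := ⟨⟨hS0ne.choose, S0, hS0, hS0ne.choose_spec⟩⟩
  refine SimpleGraph.Connected.mk ?_
  rintro ⟨x, hx⟩ ⟨y, hy⟩
  obtain ⟨Sx, hSx, hxS⟩ := hx
  obtain ⟨Sy, hSy, hyS⟩ := hy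
  rcases hchain.total hSx hSy with hle | hle
  · exact reach_mono' G (Set.subset_sUnion_of_mem hSy)
      (hle hxS) hyS ((hconn Sy hSy).preconnected ⟨x, hle hxS⟩ ⟨y, hyS⟩)
  · exact reach_mono' G (Set.subset_sUnion_of_mem hSx)
      hxS (hle hyS) ((hconn Sx hSx).preconnected ⟨x, hxS⟩ ⟨y, hle hyS⟩)

private lemma hub_conn' (G : SimpleGraph V) {S : Set V} {h : V} (hh : h ∈ S)
    (hub : ∀ v ∈ S, v = h ∨ G.Adj h v) : (G.induce S).Connected := by
  haveI : Nonempty S := ⟨⟨h, hh⟩⟩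
  refine SimpleGraph.Connected.mk ?_
  have key : ∀ x : S, (G.induce S).Reachable ⟨h, hh⟩ x := by
    rintro ⟨x, hx⟩
    rcases hub x hx with rfl | hadj
    · rfl
    · exact SimpleGraph.Adj.reachable (by simpa using hadj)
  exact fun x y => (key x).symm.trans (key y)

private lemma diamond_biconn' (G : SimpleGraph V) {a b c d : V}
    (hd : InducedDiamond G a b c d) : IsBiconn G {a, b, c, d} := by
  obtain ⟨hab, hac, had, hbc, hbd, hcd, ab, ac, ad, bc, bd, ncd⟩ := hd
  constructor
  · refine hub_conn' G (S := {a, b, c, d}) (h := a) (by simp) ?_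
    intro v hv
    rcases hv with rfl | rfl | rfl | rfl
    · exact Or.inl rfl
    · exact Or.inr ab
    · exact Or.inr ac
    · exact Or.inr ad
  · intro v hv
    rcases hv with rfl | rfl | rfl | rfl
    · -- remove a, hub b
      refine hub_conn' G (h := b) ⟨by simp, by simp [hab.symm]⟩ ?_
      rintro w ⟨hw, hwv⟩
      rcases hw with rfl | rfl | rfl | rfl
      · exact absurd rfl hwv
      · exact Or.inl rfl
      · exact Or.inr bc
      · exact Or.inr bd
    · refine hub_conn' G (h := a) ⟨by simp, hab⟩ ?_
      rintro w ⟨hw, hwv⟩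
      rcases hw with rfl | rfl | rfl | rfl
      · exact Or.inl rfl
      · exact absurd rfl hwv
      · exact Or.inr ac
      · exact Or.inr ad
    · refine hub_conn' G (h := a) ⟨by simp, hac⟩ ?_
      rintro w ⟨hw, hwv⟩
      rcases hw with rfl | rfl | rfl | rfl
      · exact Or.inl rfl
      · exact Or.inr ab
      · exact absurd rfl hwv
      · exact Or.inr ad
    · refine hub_conn' G (h := a) ⟨by simp, had⟩ ?_
      rintro w ⟨hw, hwv⟩
      rcases hw with rfl | rfl | rfl | rfl
      · exact Or.inl rfl
      · exact Or.inr ab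
      · exact Or.inr ac
      · exact absurd rfl hwv

private lemma two_nbrs' (G : SimpleGraph V) {C I B : Set V}
    (hunion : ∀ v, v ∈ C ∨ v ∈ I) (hI : ∀ u ∈ I, ∀ v ∈ I, ¬ G.Adj u v)
    (hB : IsBiconn G B) {x y : V} (hx : x ∈ B) (hy : y ∈ B) (hxy : x ≠ y)
    (hnadj : ¬ G.Adj x y) (hxI : x ∈ I) :
    ∃ u₁ u₂, u₁ ∈ C ∧ u₂ ∈ C ∧ u₁ ≠ u₂ ∧ G.Adj x u₁ ∧ G.Adj x u₂ := by
  obtain ⟨z, hzB, hxz⟩ := exists_nbr' G hB.1 hx hy hxy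
  have hzC : z ∈ C := by
    rcases hunion z with h | h
    · exact h
    · exact absurd hxz (hI x hxI z h)
  have hyz : y ≠ z := fun h => hnadj (h ▸ hxz)
  have hconn := hB.2 z hzB
  have hxB' : x ∈ B \ {z} := ⟨hx, fun h => hxz.ne (Set.mem_singleton_iff.mp h)⟩
  have hyB' : y ∈ B \ {z} := ⟨hy, by simpa using hyz⟩
  obtain ⟨z', hz'B, hxz'⟩ := exists_nbr' G hconn hxB' hyB' hxy
  have hz'C : z' ∈ C := by
    rcases hunion z' with h | h
    · exact h
    · exact absurd hxz' (hI x hxI z' h)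
  exact ⟨z, z', hzC, hz'C, fun h => hz'B.2 (by simp [← h]), hxz, hxz'⟩

theorem stmt_1 (G : SimpleGraph V)
    (C I : Set V) (hunion : ∀ v, v ∈ C ∨ v ∈ I) (hdisj : Disjoint C I)
    (hC : G.IsClique C) (hI : ∀ u ∈ I, ∀ v ∈ I, ¬ G.Adj u v) :
    IsBlockGraph G ↔ ¬ ∃ a b c d : V, InducedDiamond G a b c d := by
  constructor
  · rintro hBG ⟨a, b, c, d, hd⟩
    -- Zorn: extend the diamond to a maximal biconnected set
    set D : Set V := {a, b, c, d} with hD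
    set 𝒮 : Set (Set V) := {B | IsBiconn G B ∧ D ⊆ B} with h𝒮
    have hzorn : ∀ ch ⊆ 𝒮, IsChain (· ⊆ ·) ch → ch.Nonempty →
        ∃ ub ∈ 𝒮, ∀ s ∈ ch, s ⊆ ub := by
      intro ch hch hchain hne
      refine ⟨⋃₀ ch, ⟨⟨?_, ?_⟩, ?_⟩, fun s hs => Set.subset_sUnion_of_mem hs⟩
      · exact chain_union_conn' G ch hchain hne fun S hS => (hch hS).1.1
      · intro v hv
        have heq : (⋃₀ ch) \ {v} = ⋃₀ ((fun S => S \ {v}) '' ch) := by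
          ext w
          simp only [Set.mem_diff, Set.mem_sUnion, Set.mem_image, Set.mem_singleton_iff]
          constructor
          · rintro ⟨⟨S, hS, hwS⟩, hwv⟩
            exact ⟨S \ {v}, ⟨S, hS, rfl⟩, hwS, hwv⟩
          · rintro ⟨_, ⟨S, hS, rfl⟩, hwS, hwv⟩
            exact ⟨⟨S, hS, hwS⟩, hwv⟩
        rw [heq]
        refine chain_union_conn' G _ ?_ (hne.image _) ?_
        · rintro _ ⟨S, hS, rfl⟩ _ ⟨T, hT, rfl⟩ hne'
          rcases hchain.total hS hT with h | h
          · exact Or.inl (Set.diff_subset_diff_left h)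
          · exact Or.inr (Set.diff_subset_diff_left h)
        · rintro _ ⟨S, hS, rfl⟩
          show (G.induce (S \ {v})).Connected
          by_cases hvS : v ∈ S
          · exact (hch hS).1.2 v hvS
          · rw [Set.diff_singleton_eq_self hvS]
            exact (hch hS).1.1
      · obtain ⟨S0, hS0⟩ := hne
        exact (hch hS0).2.trans (Set.subset_sUnion_of_mem hS0)
    obtain ⟨M, hDM, hM⟩ := zorn_subset_nonempty 𝒮 hzorn D ⟨diamond_biconn' G hd, subset_rfl⟩
    have hblock : IsBlock G M := by
      refine ⟨hM.prop.1, fun B' hB' hMB' => ?_⟩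
      have : B' ∈ 𝒮 := ⟨hB', hDM.trans hMB'⟩
      exact le_antisymm (hM.2 this hMB') hMB'
    have hclique := hBG M hblock
    have hcM : c ∈ M := hDM (by simp [hD])
    have hdM : d ∈ M := hDM (by simp [hD])
    exact hd.2.2.2.2.2.2.2.2.2.2.2 (hclique hcM hdM hd.2.2.2.2.2.1)
  · -- diamond-free ⇒ block graph
    intro hnd B hB
    intro x hx y hy hxy
    by_contra hnadj
    -- x and y cannot both lie in C
    have key : ∀ x' y', x' ∈ B → y' ∈ B → x' ≠ y' → ¬ G.Adj x' y' → x' ∈ I → False := by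
      intro x' y' hx' hy' hxy' hnadj' hx'I
      obtain ⟨u₁, u₂, hu₁C, hu₂C, hu12, hxu₁, hxu₂⟩ :=
        two_nbrs' G hunion hI hB.1 hx' hy' hxy' hnadj' hx'I
      have hu₁u₂ : G.Adj u₁ u₂ := hC hu₁C hu₂C hu12
      rcases hunion y' with hy'C | hy'I
      · -- y' ∈ C : u₁, u₂ are common neighbors
        have h1 : u₁ ≠ y' := fun h => hnadj' (h ▸ hxu₁)
        have h2 : u₂ ≠ y' := fun h => hnadj' (h ▸ hxu₂)
        exact hnd ⟨u₁, u₂, x', y', hu12, hxu₁.ne.symm, h1, hxu₂.ne.symm, h2, hxy',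
          hu₁u₂, hxu₁.symm, hC hu₁C hy'C h1, hxu₂.symm, hC hu₂C hy'C h2, hnadj'⟩
      · -- y' ∈ I too
        obtain ⟨w₁, w₂, hw₁C, hw₂C, hw12, hyw₁, hyw₂⟩ :=
          two_nbrs' G hunion hI hB.1 hy' hx' hxy'.symm (fun h => hnadj' h.symm) hy'I
        by_cases hxw : G.Adj x' w₁ ∧ G.Adj x' w₂
        · exact hnd ⟨w₁, w₂, x', y', hw12, hxw.1.ne.symm, hyw₁.ne.symm, hxw.2.ne.symm,
            hyw₂.ne.symm, hxy', hC hw₁C hw₂C hw12, hxw.1.symm, hyw₁.symm, hxw.2.symm,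
            hyw₂.symm, hnadj'⟩
        · obtain ⟨w, hwC, hnxw⟩ : ∃ w, w ∈ C ∧ ¬ G.Adj x' w := by
            rcases not_and_or.mp hxw with h | h
            · exact ⟨w₁, hw₁C, h⟩
            · exact ⟨w₂, hw₂C, h⟩
          have hxw' : x' ≠ w := fun h => (Set.disjoint_left.mp hdisj (h ▸ hwC)) hx'I
          have h1 : u₁ ≠ w := fun h => hnxw (h ▸ hxu₁)
          have h2 : u₂ ≠ w := fun h => hnxw (h ▸ hxu₂)
          exact hnd ⟨u₁, u₂, x', w, hu12, hxu₁.ne.symm, h1, hxu₂.ne.symm, h2, hxw',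
            hu₁u₂, hxu₁.symm, hC hu₁C hwC h1, hxu₂.symm, hC hu₂C hwC h2, hnxw⟩
    rcases hunion x with hxC | hxI
    · rcases hunion y with hyC | hyI
      · exact hnadj (hC hxC hyC hxy)
      · exact key y x hy hx hxy.symm (fun h => hnadj h.symm) hyI
    · exact key x y hx hy hxy hnadj hxI
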